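/- Let E be a real normed vector space and N a smooth (1,1) tensor field on E with vanishing Nijenhuis torsion, T(N) = 0. Let a_k : E → ℝ, k = 0,1,2,…, be arbitrary smooth functions and define (1,1) tensor fields M_k recursively by M_0 = I (the identity) and M_{k+1} = N M_k − a_k·I (pointwise). Then for every k ≥ 1 the Haantjes tensor of M_k vanishes: H(M_k)(X,Y) = 0 for all vector fields X, Y on E. -/

import Mathlib

variable {E : Type*} [NormedAddCommGroup E] [NormedSpace ℝ E]

/-- Lie bracket of vector fields on `E`: `[X,Y](x) = DY(x)(X(x)) − DX(x)(Y(x))`. -/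
noncomputable def lie (X Y : E → E) : E → E :=
  fun x => fderiv ℝ Y x (X x) - fderiv ℝ X x (Y x)

/-- Pointwise action of a (1,1) tensor field on a vector field. -/
def app (N : E → E →L[ℝ] E) (X : E → E) : E → E := fun x => N x (X x)

/-- Pointwise `k`-th power of a (1,1) tensor field. -/
def pw (N : E → E →L[ℝ] E) (k : ℕ) : E → E →L[ℝ] E := fun x => (N x) ^ k

/-- Frölicher–Nijenhuis bracket of two (1,1) tensor fields, evaluated on vector fields. -/
noncomputable def fnBracket (N₁ N₂ : E → E →L[ℝ] E) (X Y : E → E) : E → E :=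
  fun x =>
    N₁ x (N₂ x (lie X Y x)) + N₂ x (N₁ x (lie X Y x))
      + lie (app N₁ X) (app N₂ Y) x + lie (app N₂ X) (app N₁ Y) x
      - N₁ x (lie (app N₂ X) Y x + lie X (app N₂ Y) x)
      - N₂ x (lie (app N₁ X) Y x + lie X (app N₁ Y) x)

/-- Nijenhuis torsion of a (1,1) tensor field, evaluated on vector fields. -/
noncomputable def tor (N : E → E →L[ℝ] E) (X Y : E → E) : E → E :=
  fun x =>
    lie (app N X) (app N Y) x
      + N x (N x (lie X Y x) - lie (app N X) Y x - lie X (app N Y) x)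

/-- Haantjes tensor of a (1,1) tensor field, evaluated on vector fields. -/
noncomputable def haan (M : E → E →L[ℝ] E) (X Y : E → E) : E → E :=
  fun x =>
    M x (M x (tor M X Y x)) + tor M (app M X) (app M Y) x
      - M x (tor M (app M X) Y x + tor M X (app M Y) x)

/-- The bracket `[A,B]_X = [AX,BX] − A[X,BX] + B[X,AX]` of two (1,1) tensor fields
with respect to a vector field `X`. -/
noncomputable def brX (A B : E → E →L[ℝ] E) (X : E → E) : E → E :=
  fun x =>
    lie (app A X) (app B X) x - A x (lie X (app B X) x) + B x (lie X (app A X) x)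

/-- A 1-form is closed iff its Fréchet derivative is symmetric. -/
def IsClosedOneForm (ρ : E → E →L[ℝ] ℝ) : Prop :=
  ∀ x u v, fderiv ℝ ρ x u v = fderiv ℝ ρ x v u

-- basic smoothness
lemma dAt {F : Type*} [NormedAddCommGroup F] [NormedSpace ℝ F] {f : E → F}
    (h : ContDiff ℝ (⊤ : ℕ∞) f) (x : E) : DifferentiableAt ℝ f x :=
  (h.differentiable (by simp)).differentiableAt

lemma sm_pw {N : E → E →L[ℝ] E} (hN : ContDiff ℝ (⊤ : ℕ∞) N) (i : ℕ) :
    ContDiff ℝ (⊤ : ℕ∞) (pw N i) := by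
  induction i with
  | zero =>
      have h0 : pw N 0 = fun _ => (1 : E →L[ℝ] E) := by funext x; simp [pw]
      rw [h0]; exact contDiff_const
  | succ i ih =>
      have : pw N (i+1) = fun x => pw N i x * N x := by
        funext x; simp [pw, pow_succ]
      rw [this]; exact ih.mul hN

lemma sm_app {N : E → E →L[ℝ] E} {X : E → E} (hN : ContDiff ℝ (⊤ : ℕ∞) N)
    (hX : ContDiff ℝ (⊤ : ℕ∞) X) : ContDiff ℝ (⊤ : ℕ∞) (app N X) :=
  hN.clm_apply hX

-- lie lemmas
lemma lie_anti (U V : E → E) (x : E) : lie V U x = - lie U V x := by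
  simp [lie, neg_sub]

lemma lie_smul_left (b : E → ℝ) (U V : E → E) (x : E)
    (hb : DifferentiableAt ℝ b x) (hU : DifferentiableAt ℝ U x) :
    lie (fun y => b y • U y) V x = b x • lie U V x - (fderiv ℝ b x (V x)) • U x := by
  simp only [lie, fderiv_fun_smul hb hU, ContinuousLinearMap.add_apply,
    ContinuousLinearMap.smul_apply, ContinuousLinearMap.smulRight_apply, map_smul]
  module

lemma lie_smul_right (c : E → ℝ) (U V : E → E) (x : E)
    (hc : DifferentiableAt ℝ c x) (hV : DifferentiableAt ℝ V x) :
    lie U (fun y => c y • V y) x = c x • lie U V x + (fderiv ℝ c x (U x)) • V x := by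
  simp only [lie, fderiv_fun_smul hc hV, ContinuousLinearMap.add_apply,
    ContinuousLinearMap.smul_apply, ContinuousLinearMap.smulRight_apply, map_smul]
  module

lemma lie_sum_left {ι : Type*} (s : Finset ι) (U : ι → E → E) (V : E → E) (x : E)
    (hU : ∀ i ∈ s, DifferentiableAt ℝ (U i) x) :
    lie (fun y => ∑ i ∈ s, U i y) V x = ∑ i ∈ s, lie (U i) V x := by
  simp only [lie, fderiv_fun_sum hU, ContinuousLinearMap.sum_apply, map_sum,
    Finset.sum_sub_distrib]

lemma lie_sum_right {ι : Type*} (s : Finset ι) (U : E → E) (V : ι → E → E) (x : E)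
    (hV : ∀ i ∈ s, DifferentiableAt ℝ (V i) x) :
    lie U (fun y => ∑ i ∈ s, V i y) x = ∑ i ∈ s, lie U (V i) x := by
  simp only [lie, fderiv_fun_sum hV, ContinuousLinearMap.sum_apply, map_sum,
    Finset.sum_sub_distrib]
/-- mixed torsion -/
noncomputable def mtor (A B : E → E →L[ℝ] E) (X Y : E → E) : E → E :=
  fun x => lie (app A X) (app B Y) x + A x (B x (lie X Y x))
    - A x (lie X (app B Y) x) - B x (lie (app A X) Y x)

lemma mtor_self (A : E → E →L[ℝ] E) (X Y : E → E) (x : E) :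
    mtor A A X Y x = tor A X Y x := by
  simp only [mtor, tor, map_sub]; abel

lemma app_pw_zero (N : E → E →L[ℝ] E) (X : E → E) : app (pw N 0) X = X := by
  funext y; show ((N y)^0) (X y) = X y; rw [pow_zero]; rfl

lemma app_pw_succ (N : E → E →L[ℝ] E) (X : E → E) (i : ℕ) :
    app (pw N (i+1)) X = app N (app (pw N i) X) := by
  funext y; show ((N y)^(i+1)) (X y) = N y (((N y)^i) (X y)); rw [pow_succ']; rfl

lemma mtor_pw_zero_left (N B : E → E →L[ℝ] E) (X Y : E → E) (x : E) :
    mtor (pw N 0) B X Y x = 0 := by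
  have h2 : ∀ v : E, pw N 0 x v = v := fun v => by show ((N x)^0) v = v; rw [pow_zero]; rfl
  simp only [mtor, app_pw_zero, h2]
  abel

lemma mtor_pw_zero_right (N A : E → E →L[ℝ] E) (X Y : E → E) (x : E) :
    mtor A (pw N 0) X Y x = 0 := by
  have h2 : ∀ v : E, pw N 0 x v = v := fun v => by show ((N x)^0) v = v; rw [pow_zero]; rfl
  simp only [mtor, app_pw_zero, h2]
  abel

lemma mtor_succ_left (N B : E → E →L[ℝ] E) (i : ℕ) (X Y : E → E) (x : E) :
    mtor (pw N (i+1)) B X Y x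
      = mtor N B (app (pw N i) X) Y x + N x (mtor (pw N i) B X Y x) := by
  have h2 : ∀ v : E, pw N (i+1) x v = N x (pw N i x v) := fun v => by
    show ((N x)^(i+1)) v = N x (((N x)^i) v); rw [pow_succ']; rfl
  simp only [mtor, app_pw_succ, h2, map_add, map_sub]
  abel

lemma mtor_antisymm (A B : E → E →L[ℝ] E) (X Y : E → E) (x : E)
    (hc : (A x) * (B x) = (B x) * (A x)) :
    mtor A B X Y x = - mtor B A Y X x := by
  have hcomm : ∀ v : E, B x (A x v) = A x (B x v) := fun v => by
    rw [← ContinuousLinearMap.mul_apply, ← ContinuousLinearMap.mul_apply, hc]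
  simp only [mtor, lie_anti (app A X) (app B Y) x, lie_anti X Y x,
    lie_anti (app A X) Y x, lie_anti X (app B Y) x, map_neg, hcomm]
  abel

lemma mtor_N_pow (N : E → E →L[ℝ] E) (hN : ContDiff ℝ (⊤ : ℕ∞) N)
    (hT : ∀ X Y : E → E, ContDiff ℝ (⊤ : ℕ∞) X → ContDiff ℝ (⊤ : ℕ∞) Y →
      ∀ x, tor N X Y x = 0)
    (j : ℕ) (X Y : E → E) (hX : ContDiff ℝ (⊤ : ℕ∞) X) (hY : ContDiff ℝ (⊤ : ℕ∞) Y)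
    (x : E) : mtor N (pw N j) X Y x = 0 := by
  induction j with
  | zero => exact mtor_pw_zero_right N N X Y x
  | succ j ih =>
      have hc : (N x) * (pw N (j+1) x) = (pw N (j+1) x) * (N x) := by
        show (N x) * ((N x)^(j+1)) = ((N x)^(j+1)) * (N x)
        exact ((Commute.refl (N x)).pow_right (j+1)).eq
      have hc2 : (pw N j x) * (N x) = (N x) * (pw N j x) := by
        show ((N x)^j) * (N x) = (N x) * ((N x)^j)
        exact ((Commute.refl (N x)).pow_left j).eq
      rw [mtor_antisymm N (pw N (j+1)) X Y x hc, mtor_succ_left N N j Y X x,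
        mtor_self, hT (app (pw N j) Y) X ((sm_pw hN j).clm_apply hY) hX x,
        mtor_antisymm (pw N j) N Y X x hc2, ih]
      simp

lemma mtor_pow (N : E → E →L[ℝ] E) (hN : ContDiff ℝ (⊤ : ℕ∞) N)
    (hT : ∀ X Y : E → E, ContDiff ℝ (⊤ : ℕ∞) X → ContDiff ℝ (⊤ : ℕ∞) Y →
      ∀ x, tor N X Y x = 0)
    (i j : ℕ) (X Y : E → E) (hX : ContDiff ℝ (⊤ : ℕ∞) X) (hY : ContDiff ℝ (⊤ : ℕ∞) Y)
    (x : E) : mtor (pw N i) (pw N j) X Y x = 0 := by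
  induction i with
  | zero => exact mtor_pw_zero_left N (pw N j) X Y x
  | succ i ih =>
      rw [mtor_succ_left, mtor_N_pow N hN hT j (app (pw N i) X) Y
        ((sm_pw hN i).clm_apply hX) hY x, ih]
      simp

lemma app_smul (b : E → ℝ) (A : E → E →L[ℝ] E) (X : E → E) :
    app (fun y => b y • A y) X = fun y => b y • app A X y := by
  funext y; simp [app]

lemma app_sum {ι : Type*} (s : Finset ι) (A : ι → E → E →L[ℝ] E) (X : E → E) :
    app (fun y => ∑ i ∈ s, A i y) X = fun y => ∑ i ∈ s, app (A i) X y := by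
  funext y; simp [app]

lemma mtor_smul_left (b : E → ℝ) (A B : E → E →L[ℝ] E) (X Y : E → E) (x : E)
    (hb : DifferentiableAt ℝ b x) (hAX : DifferentiableAt ℝ (app A X) x) :
    mtor (fun y => b y • A y) B X Y x
      = b x • mtor A B X Y x - (fderiv ℝ b x (app B Y x)) • app A X x
        + (fderiv ℝ b x (Y x)) • (B x (app A X x)) := by
  simp only [mtor, app_smul, lie_smul_left b (app A X) (app B Y) x hb hAX,
    lie_smul_left b (app A X) Y x hb hAX, ContinuousLinearMap.smul_apply,
    map_sub, map_smul]
  module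

lemma mtor_smul_right (c : E → ℝ) (A B : E → E →L[ℝ] E) (X Y : E → E) (x : E)
    (hc : DifferentiableAt ℝ c x) (hBY : DifferentiableAt ℝ (app B Y) x) :
    mtor A (fun y => c y • B y) X Y x
      = c x • mtor A B X Y x + (fderiv ℝ c x (app A X x)) • app B Y x
        - (fderiv ℝ c x (X x)) • (A x (app B Y x)) := by
  simp only [mtor, app_smul, lie_smul_right c (app A X) (app B Y) x hc hBY,
    lie_smul_right c X (app B Y) x hc hBY, ContinuousLinearMap.smul_apply,
    map_add, map_sub, map_smul]
  module

lemma mtor_sum_left {ι : Type*} (s : Finset ι) (A : ι → E → E →L[ℝ] E)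
    (B : E → E →L[ℝ] E) (X Y : E → E) (x : E)
    (hA : ∀ i ∈ s, DifferentiableAt ℝ (app (A i) X) x) :
    mtor (fun y => ∑ i ∈ s, A i y) B X Y x = ∑ i ∈ s, mtor (A i) B X Y x := by
  simp only [mtor, app_sum,
    lie_sum_left s (fun i => app (A i) X) (app B Y) x hA,
    lie_sum_left s (fun i => app (A i) X) Y x hA,
    ContinuousLinearMap.sum_apply, map_sum, Finset.sum_add_distrib,
    Finset.sum_sub_distrib]

lemma mtor_sum_right {ι : Type*} (s : Finset ι) (A : E → E →L[ℝ] E)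
    (B : ι → E → E →L[ℝ] E) (X Y : E → E) (x : E)
    (hB : ∀ i ∈ s, DifferentiableAt ℝ (app (B i) Y) x) :
    mtor A (fun y => ∑ i ∈ s, B i y) X Y x = ∑ i ∈ s, mtor A (B i) X Y x := by
  simp only [mtor, app_sum,
    lie_sum_right s (app A X) (fun i => app (B i) Y) x hB,
    lie_sum_right s X (fun i => app (B i) Y) x hB,
    ContinuousLinearMap.sum_apply, map_sum, Finset.sum_add_distrib,
    Finset.sum_sub_distrib]

lemma torRep (N : E → E →L[ℝ] E) (hN : ContDiff ℝ (⊤ : ℕ∞) N)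
    (hT : ∀ X Y : E → E, ContDiff ℝ (⊤ : ℕ∞) X → ContDiff ℝ (⊤ : ℕ∞) Y →
      ∀ x, tor N X Y x = 0)
    (m : ℕ) (b : ℕ → E → ℝ) (hb : ∀ i, ContDiff ℝ (⊤ : ℕ∞) (b i))
    (M : E → E →L[ℝ] E)
    (hM : ∀ y, M y = ∑ i ∈ Finset.range m, b i y • pw N i y)
    (U V : E → E) (hU : ContDiff ℝ (⊤ : ℕ∞) U) (hV : ContDiff ℝ (⊤ : ℕ∞) V)
    (x : E) :
    tor M U V x = ∑ i ∈ Finset.range m,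
      (fderiv ℝ (b i) x (app M U x) • app (pw N i) V x
       - fderiv ℝ (b i) x (app M V x) • app (pw N i) U x
       + fderiv ℝ (b i) x (V x) • (M x (app (pw N i) U x))
       - fderiv ℝ (b i) x (U x) • (M x (app (pw N i) V x))) := by
  have hMs : M = fun y => ∑ i ∈ Finset.range m, b i y • pw N i y := funext hM
  have hdb : ∀ i, DifferentiableAt ℝ (b i) x := fun i => dAt (hb i) x
  have hPU : ∀ i, DifferentiableAt ℝ (app (pw N i) U) x :=
    fun i => dAt ((sm_pw hN i).clm_apply hU) x
  have hPV : ∀ i, DifferentiableAt ℝ (app (pw N i) V) x :=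
    fun i => dAt ((sm_pw hN i).clm_apply hV) x
  have hAU : ∀ i ∈ Finset.range m,
      DifferentiableAt ℝ (app (fun y => b i y • pw N i y) U) x := by
    intro i _
    rw [app_smul]
    exact dAt ((hb i).smul ((sm_pw hN i).clm_apply hU)) x
  have hAV : ∀ i ∈ Finset.range m,
      DifferentiableAt ℝ (app (fun y => b i y • pw N i y) V) x := by
    intro i _
    rw [app_smul]
    exact dAt ((hb i).smul ((sm_pw hN i).clm_apply hV)) x
  have expand_left : ∀ B : E → E →L[ℝ] E, mtor M B U V x
      = ∑ i ∈ Finset.range m, mtor (fun y => b i y • pw N i y) B U V x := by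
    intro B
    rw [hMs]
    exact mtor_sum_left (Finset.range m) (fun i y => b i y • pw N i y) B U V x hAU
  have expand_right : ∀ i, mtor (pw N i) M U V x
      = ∑ j ∈ Finset.range m, mtor (pw N i) (fun y => b j y • pw N j y) U V x := by
    intro i
    rw [hMs]
    exact mtor_sum_right (Finset.range m) (pw N i) (fun j y => b j y • pw N j y) U V x hAV
  have hMapp : ∀ v : E, M x v = ∑ i ∈ Finset.range m, b i x • (pw N i x v) := by
    intro v
    rw [hM x]
    simp
  have inner : ∀ i, mtor (pw N i) M U V x = ∑ j ∈ Finset.range m,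
      (fderiv ℝ (b j) x (app (pw N i) U x) • app (pw N j) V x
       - fderiv ℝ (b j) x (U x) • (pw N i x (app (pw N j) V x))) := by
    intro i
    rw [expand_right i]
    refine Finset.sum_congr rfl fun j _ => ?_
    rw [mtor_smul_right (b j) (pw N i) (pw N j) U V x (hdb j) (hPV j),
      mtor_pow N hN hT i j U V hU hV x]
    simp [sub_eq_add_neg]
  have key : ∑ i ∈ Finset.range m, b i x • (∑ j ∈ Finset.range m,
        (fderiv ℝ (b j) x (app (pw N i) U x) • app (pw N j) V x
         - fderiv ℝ (b j) x (U x) • (pw N i x (app (pw N j) V x))))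
      = ∑ j ∈ Finset.range m,
        (fderiv ℝ (b j) x (app M U x) • app (pw N j) V x
         - fderiv ℝ (b j) x (U x) • (M x (app (pw N j) V x))) := by
    calc ∑ i ∈ Finset.range m, b i x • (∑ j ∈ Finset.range m,
          (fderiv ℝ (b j) x (app (pw N i) U x) • app (pw N j) V x
           - fderiv ℝ (b j) x (U x) • (pw N i x (app (pw N j) V x))))
        = ∑ i ∈ Finset.range m, ∑ j ∈ Finset.range m,
          (b i x • (fderiv ℝ (b j) x (app (pw N i) U x) • app (pw N j) V x)
           - b i x • (fderiv ℝ (b j) x (U x) • (pw N i x (app (pw N j) V x)))) := by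
          refine Finset.sum_congr rfl fun i _ => ?_
          rw [Finset.smul_sum]
          exact Finset.sum_congr rfl fun j _ => smul_sub _ _ _
      _ = ∑ j ∈ Finset.range m, ∑ i ∈ Finset.range m,
          (b i x • (fderiv ℝ (b j) x (app (pw N i) U x) • app (pw N j) V x)
           - b i x • (fderiv ℝ (b j) x (U x) • (pw N i x (app (pw N j) V x)))) :=
          Finset.sum_comm
      _ = ∑ j ∈ Finset.range m,
          (fderiv ℝ (b j) x (app M U x) • app (pw N j) V x
           - fderiv ℝ (b j) x (U x) • (M x (app (pw N j) V x))) := by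
          refine Finset.sum_congr rfl fun j _ => ?_
          rw [Finset.sum_sub_distrib]
          congr 1
          · have h1 : app M U x = M x (U x) := rfl
            rw [h1, hMapp (U x), map_sum, Finset.sum_smul]
            refine Finset.sum_congr rfl fun i _ => ?_
            rw [map_smul]
            rw [smul_smul]
            rfl
          · rw [hMapp (app (pw N j) V x), Finset.smul_sum]
            refine Finset.sum_congr rfl fun i _ => ?_
            rw [smul_comm]
  calc tor M U V x = mtor M M U V x := (mtor_self M U V x).symm
    _ = ∑ i ∈ Finset.range m, mtor (fun y => b i y • pw N i y) M U V x :=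
        expand_left M
    _ = ∑ i ∈ Finset.range m,
        (b i x • mtor (pw N i) M U V x
         - fderiv ℝ (b i) x (app M V x) • app (pw N i) U x
         + fderiv ℝ (b i) x (V x) • (M x (app (pw N i) U x))) := by
        refine Finset.sum_congr rfl fun i _ => ?_
        exact mtor_smul_left (b i) (pw N i) M U V x (hdb i) (hPU i)
    _ = (∑ i ∈ Finset.range m, b i x • mtor (pw N i) M U V x)
        + ∑ i ∈ Finset.range m,
          (fderiv ℝ (b i) x (V x) • (M x (app (pw N i) U x))
           - fderiv ℝ (b i) x (app M V x) • app (pw N i) U x) := by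
        rw [← Finset.sum_add_distrib]
        exact Finset.sum_congr rfl fun i _ => by abel
    _ = ∑ i ∈ Finset.range m,
      (fderiv ℝ (b i) x (app M U x) • app (pw N i) V x
       - fderiv ℝ (b i) x (app M V x) • app (pw N i) U x
       + fderiv ℝ (b i) x (V x) • (M x (app (pw N i) U x))
       - fderiv ℝ (b i) x (U x) • (M x (app (pw N i) V x))) := by
        simp only [inner]
        rw [key, ← Finset.sum_add_distrib]
        exact Finset.sum_congr rfl fun i _ => by abel

set_option synthInstance.maxHeartbeats 1000000 in
lemma haan_poly (N : E → E →L[ℝ] E) (hN : ContDiff ℝ (⊤ : ℕ∞) N)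
    (hT : ∀ X Y : E → E, ContDiff ℝ (⊤ : ℕ∞) X → ContDiff ℝ (⊤ : ℕ∞) Y →
      ∀ x, tor N X Y x = 0)
    (m : ℕ) (b : ℕ → E → ℝ) (hb : ∀ i, ContDiff ℝ (⊤ : ℕ∞) (b i))
    (M : E → E →L[ℝ] E)
    (hM : ∀ y, M y = ∑ i ∈ Finset.range m, b i y • pw N i y)
    (X Y : E → E) (hX : ContDiff ℝ (⊤ : ℕ∞) X) (hY : ContDiff ℝ (⊤ : ℕ∞) Y)
    (x : E) : haan M X Y x = 0 := by
  have hMc : ContDiff ℝ (⊤ : ℕ∞) M := by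
    rw [funext hM]
    exact ContDiff.sum fun i _ => (hb i).smul (sm_pw hN i)
  have hMX : ContDiff ℝ (⊤ : ℕ∞) (app M X) := hMc.clm_apply hX
  have hMY : ContDiff ℝ (⊤ : ℕ∞) (app M Y) := hMc.clm_apply hY
  have hcomm : ∀ (i : ℕ) (v : E), pw N i x (M x v) = M x (pw N i x v) := by
    intro i v
    have hc : Commute ((N x)^i) (M x) := by
      rw [hM x]
      refine Commute.sum_right _ _ _ fun j _ => ?_
      exact (Commute.pow_pow_self (N x) i j).smul_right _
    show ((N x)^i) (M x v) = M x (((N x)^i) v)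
    rw [← ContinuousLinearMap.mul_apply, hc.eq, ContinuousLinearMap.mul_apply]
  simp only [haan]
  rw [torRep N hN hT m b hb M hM X Y hX hY x,
      torRep N hN hT m b hb M hM (app M X) (app M Y) hMX hMY x,
      torRep N hN hT m b hb M hM (app M X) Y hMX hY x,
      torRep N hN hT m b hb M hM X (app M Y) hX hMY x]
  simp only [app, map_sum, map_add, map_sub, map_smul, ← Finset.sum_add_distrib,
    ← Finset.sum_sub_distrib]
  refine Finset.sum_eq_zero fun i _ => ?_
  simp only [hcomm i]
  abel


theorem stmt17 (N : E → E →L[ℝ] E) (hN : ContDiff ℝ (⊤ : ℕ∞) N)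
    (hT : ∀ X Y : E → E, ContDiff ℝ (⊤ : ℕ∞) X → ContDiff ℝ (⊤ : ℕ∞) Y →
      ∀ x, tor N X Y x = 0)
    (a : ℕ → E → ℝ) (ha : ∀ k, ContDiff ℝ (⊤ : ℕ∞) (a k))
    (M : ℕ → E → E →L[ℝ] E)
    (hM0 : ∀ x, M 0 x = 1)
    (hMrec : ∀ k x, M (k + 1) x = (N x).comp (M k x) - a k x • (1 : E →L[ℝ] E))
    (k : ℕ) (hk : 1 ≤ k)
    (X Y : E → E) (hX : ContDiff ℝ (⊤ : ℕ∞) X) (hY : ContDiff ℝ (⊤ : ℕ∞) Y) (x : E) :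
    haan (M k) X Y x = 0 := by
  have main : ∀ n : ℕ, ∃ b : ℕ → E → ℝ, (∀ i, ContDiff ℝ (⊤ : ℕ∞) (b i)) ∧
      ∀ y, M n y = ∑ i ∈ Finset.range (n+1), b i y • pw N i y := by
    intro n
    induction n with
    | zero =>
        refine ⟨fun _ _ => 1, fun _ => contDiff_const, fun y => ?_⟩
        simp [hM0 y, pw]
    | succ n ih =>
        obtain ⟨b, hb, hrep⟩ := ih
        refine ⟨fun i => if i = 0 then (fun y => -(a n y)) else b (i-1), ?_, ?_⟩
        · intro i; dsimp only; split
          · exact (ha n).neg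
          · exact hb _
        · intro y
          have hc : ∀ Z : E →L[ℝ] E, (N y).comp Z = N y * Z := fun _ => rfl
          rw [hMrec n y, hrep y, hc, Finset.mul_sum]
          conv_rhs => rw [Finset.sum_range_succ']
          simp [pw, mul_smul_comm, ← pow_succ', neg_smul, sub_eq_add_neg]
  obtain ⟨b, hb, hrep⟩ := main k
  exact haan_poly N hN hT (k+1) b hb (M k) hrep X Y hX hY x
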